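/- For every t ∈ ℂ, the polynomial g = x⁴ + z³·w + w³ − t·w⁴ ∈ ℂ[x,z,w] has local Milnor number 21 at the origin: dim_ℂ O/J(g)·O = 21, where O = ℂ[x,z,w]_{(x,z,w)} is the localization of ℂ[x,z,w] at the maximal ideal of the origin and J(g) is the ideal generated by the three partial derivatives of g. (This is the singularity of type A₃ ⊕ E₇, with μ = 3·7 = 21, of the compactified fibre 𝕐_{0,t} at the point [0:1:0:0] in the paper's Example 8.4, computed in the affine chart Y = 1.) -/

import Mathlib

open MvPolynomial

noncomputable section

/-- The maximal ideal of the origin in ℂ[x,z,w] (variables: X 0 = x, X 1 = z, X 2 = w),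
    realized as the kernel of evaluation at 0. -/
def mOrigin₃ : Ideal (MvPolynomial (Fin 3) ℂ) := RingHom.ker (eval (0 : Fin 3 → ℂ))

instance : mOrigin₃.IsMaximal :=
  RingHom.ker_isMaximal_of_surjective _ (fun r => ⟨C r, by simp⟩)

/-- The local ring O = ℂ[x,z,w]_{(x,z,w)} at the origin. -/
def O₃ : Type := Localization.AtPrime mOrigin₃

/-- g = x⁴ + z³·w + w³ − t·w⁴ (variables: X 0 = x, X 1 = z, X 2 = w). -/
def g₈₄ (t : ℂ) : MvPolynomial (Fin 3) ℂ :=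
  X 0 ^ 4 + X 1 ^ 3 * X 2 + X 2 ^ 3 - C t * X 2 ^ 4

abbrev R3 := MvPolynomial (Fin 3) ℂ

def nf : ℕ → ℕ → ℕ → R3
  | a, b, c =>
    if 3 ≤ a ∨ 3 ≤ c ∨ (2 ≤ b ∧ 1 ≤ c) then 0
    else if h : 3 ≤ b then (-3 : ℂ) • nf a (b - 3) (c + 2)
    else X 0 ^ a * X 1 ^ b * X 2 ^ c
termination_by a b c => b

lemma nf_zero {a b c : ℕ} (h : 3 ≤ a ∨ 3 ≤ c ∨ (2 ≤ b ∧ 1 ≤ c)) : nf a b c = 0 := by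
  rw [nf, if_pos h]

lemma nf_red {a b c : ℕ} (h : ¬(3 ≤ a ∨ 3 ≤ c ∨ (2 ≤ b ∧ 1 ≤ c))) (hb : 3 ≤ b) :
    nf a b c = (-3 : ℂ) • nf a (b - 3) (c + 2) := by
  rw [nf, if_neg h, dif_pos hb]

lemma nf_base {a b c : ℕ} (h : ¬(3 ≤ a ∨ 3 ≤ c ∨ (2 ≤ b ∧ 1 ≤ c))) (hb : ¬ 3 ≤ b) :
    nf a b c = X 0 ^ a * X 1 ^ b * X 2 ^ c := by
  rw [nf, if_neg h, dif_neg hb]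

def tr (a b c : ℕ) : Fin 3 →₀ ℕ :=
  Finsupp.single 0 a + Finsupp.single 1 b + Finsupp.single 2 c

@[simp] lemma tr_0 (a b c : ℕ) : tr a b c 0 = a := by simp [tr, Finsupp.single_apply]
@[simp] lemma tr_1 (a b c : ℕ) : tr a b c 1 = b := by simp [tr, Finsupp.single_apply]
@[simp] lemma tr_2 (a b c : ℕ) : tr a b c 2 = c := by simp [tr, Finsupp.single_apply]

lemma monomial_tr (a b c : ℕ) :
    (monomial (tr a b c) (1 : ℂ) : R3) = X 0 ^ a * X 1 ^ b * X 2 ^ c := by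
  rw [tr, ← one_mul (1 : ℂ), ← one_mul (1 : ℂ), ← monomial_mul, ← monomial_mul]
  simp [X_pow_eq_monomial]

lemma monomial_eq_prod (d : Fin 3 →₀ ℕ) :
    (monomial d (1 : ℂ) : R3) = X 0 ^ d 0 * X 1 ^ d 1 * X 2 ^ d 2 := by
  have hd : d = tr (d 0) (d 1) (d 2) := by
    ext i; fin_cases i <;> simp [tr, Finsupp.single_apply]
  conv_lhs => rw [hd]
  exact monomial_tr _ _ _

def pi3 : R3 →ₗ[ℂ] R3 :=
  (basisMonomials (Fin 3) ℂ).constr ℂ (fun s => nf (s 0) (s 1) (s 2))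

lemma pi3_monomial (d : Fin 3 →₀ ℕ) : pi3 (monomial d 1) = nf (d 0) (d 1) (d 2) := by
  have : (monomial d (1:ℂ) : R3) = basisMonomials (Fin 3) ℂ d := by
    simp [coe_basisMonomials]
  rw [this, pi3, Module.Basis.constr_basis]

lemma pi3_M (a b c : ℕ) : pi3 (X 0 ^ a * X 1 ^ b * X 2 ^ c) = nf a b c := by
  rw [← monomial_tr, pi3_monomial]; simp

def Jnice : Ideal R3 :=
  Ideal.span {X 0 ^ 3, X 1 ^ 2 * X 2, X 1 ^ 3 + 3 * X 2 ^ 2, X 2 ^ 3}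

lemma pi3_mul_g1 (a b c : ℕ) :
    pi3 (X 0 ^ a * X 1 ^ b * X 2 ^ c * X 0 ^ 3) = 0 := by
  have h : (X 0 ^ a : R3) * X 1 ^ b * X 2 ^ c * X 0 ^ 3
      = X 0 ^ (a + 3) * X 1 ^ b * X 2 ^ c := by ring
  rw [h, pi3_M, nf_zero (by omega)]

lemma pi3_mul_g2 (a b c : ℕ) :
    pi3 (X 0 ^ a * X 1 ^ b * X 2 ^ c * (X 1 ^ 2 * X 2)) = 0 := by
  have h : (X 0 ^ a : R3) * X 1 ^ b * X 2 ^ c * (X 1 ^ 2 * X 2)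
      = X 0 ^ a * X 1 ^ (b + 2) * X 2 ^ (c + 1) := by ring
  rw [h, pi3_M, nf_zero (by omega)]

lemma pi3_mul_g4 (a b c : ℕ) :
    pi3 (X 0 ^ a * X 1 ^ b * X 2 ^ c * X 2 ^ 3) = 0 := by
  have h : (X 0 ^ a : R3) * X 1 ^ b * X 2 ^ c * X 2 ^ 3
      = X 0 ^ a * X 1 ^ b * X 2 ^ (c + 3) := by ring
  rw [h, pi3_M, nf_zero (by omega)]

lemma pi3_mul_g3 (a b c : ℕ) :
    pi3 (X 0 ^ a * X 1 ^ b * X 2 ^ c * (X 1 ^ 3 + 3 * X 2 ^ 2)) = 0 := by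
  have h : (X 0 ^ a : R3) * X 1 ^ b * X 2 ^ c * (X 1 ^ 3 + 3 * X 2 ^ 2)
      = X 0 ^ a * X 1 ^ (b + 3) * X 2 ^ c + (3 : ℂ) • (X 0 ^ a * X 1 ^ b * X 2 ^ (c + 2)) := by
    rw [smul_eq_C_mul]
    push_cast [map_ofNat]
    ring
  rw [h, map_add, map_smul, pi3_M, pi3_M]
  by_cases ha : 3 ≤ a
  · rw [nf_zero (Or.inl ha), nf_zero (Or.inl ha)]; simp
  by_cases hc3 : 3 ≤ c
  · rw [nf_zero (by omega), nf_zero (by omega)]; simp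
  by_cases hc1 : 1 ≤ c
  · rw [nf_zero (by omega), nf_zero (by omega)]; simp
  · have hc0 : c = 0 := by omega
    subst hc0
    rw [nf_red (by omega) (by omega)]
    have hb3 : b + 3 - 3 = b := by omega
    rw [hb3]
    module

lemma pi3_mul_eq_zero_of_forall {g : R3}
    (hg : ∀ a b c : ℕ, pi3 (X 0 ^ a * X 1 ^ b * X 2 ^ c * g) = 0) (p : R3) :
    pi3 (p * g) = 0 := by
  have hp : p ∈ Submodule.span ℂ (Set.range (basisMonomials (Fin 3) ℂ)) := by
    rw [Module.Basis.span_eq]; trivial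
  induction hp using Submodule.span_induction with
  | mem x hx =>
    obtain ⟨d, rfl⟩ := hx
    rw [show ((basisMonomials (Fin 3) ℂ) d : R3) = monomial d 1 by
      simp [coe_basisMonomials]]
    rw [monomial_eq_prod]
    exact hg _ _ _
  | zero => simp
  | add x y _ _ hx hy => rw [add_mul, map_add, hx, hy, add_zero]
  | smul c x _ hx => rw [smul_mul_assoc, map_smul, hx, smul_zero]

lemma pi3_eq_zero_of_mem {x : R3} (hx : x ∈ Jnice) : pi3 x = 0 := by
  have key : ∀ p : R3, pi3 (p * x) = 0 := by
    induction hx using Submodule.span_induction with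
    | mem g hg =>
      intro p
      simp only [Set.mem_insert_iff, Set.mem_singleton_iff] at hg
      rcases hg with rfl | rfl | rfl | rfl
      · exact pi3_mul_eq_zero_of_forall pi3_mul_g1 p
      · exact pi3_mul_eq_zero_of_forall pi3_mul_g2 p
      · exact pi3_mul_eq_zero_of_forall pi3_mul_g3 p
      · exact pi3_mul_eq_zero_of_forall pi3_mul_g4 p
    | zero => intro p; simp
    | add x y _ _ hx hy => intro p; rw [mul_add, map_add, hx, hy, add_zero]
    | smul r y _ hy =>
      intro p
      rw [smul_eq_mul, show p * (r * y) = (p * r) * y by ring]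
      exact hy _
  simpa using key 1

def trip : Fin 21 → ℕ × ℕ × ℕ :=
  ![(0,0,0),(0,1,0),(0,0,1),(0,2,0),(0,1,1),(0,0,2),(0,1,2),
    (1,0,0),(1,1,0),(1,0,1),(1,2,0),(1,1,1),(1,0,2),(1,1,2),
    (2,0,0),(2,1,0),(2,0,1),(2,2,0),(2,1,1),(2,0,2),(2,1,2)]

lemma trip_inj : Function.Injective trip := by decide

lemma trip_bounds (i : Fin 21) :
    (trip i).1 < 3 ∧ (trip i).2.1 < 3 ∧ (trip i).2.2 < 3 ∧
      (2 ≤ (trip i).2.1 → (trip i).2.2 = 0) := by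
  revert i; decide

lemma trip_surj (a b c : ℕ) (ha : a < 3) (hb : b < 3) (hc : c < 3)
    (h2 : 2 ≤ b → c = 0) : ∃ i, trip i = (a, b, c) := by
  interval_cases a <;> interval_cases b <;> interval_cases c <;>
    first | decide | (exfalso; omega)

def E (i : Fin 21) : R3 :=
  X 0 ^ (trip i).1 * X 1 ^ (trip i).2.1 * X 2 ^ (trip i).2.2

lemma pi3_E (i : Fin 21) : pi3 (E i) = E i := by
  have h := trip_bounds i
  rw [E, pi3_M, nf_base (by omega) (by omega)]

lemma E_li : LinearIndependent ℂ E := by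
  have h : E = (basisMonomials (Fin 3) ℂ) ∘ fun i => tr (trip i).1 (trip i).2.1 (trip i).2.2 := by
    funext i
    simp only [Function.comp_apply, coe_basisMonomials]
    rw [monomial_tr, E]
  rw [h]
  apply (basisMonomials (Fin 3) ℂ).linearIndependent.comp
  intro i j hij
  apply trip_inj
  have h0 := congrArg (fun s => s 0) hij
  have h1 := congrArg (fun s => s 1) hij
  have h2 := congrArg (fun s => s 2) hij
  simp only [tr_0, tr_1, tr_2] at h0 h1 h2
  have : trip i = ((trip i).1, (trip i).2.1, (trip i).2.2) := rfl
  rw [this, h0, h1, h2]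

def mkJ : R3 →ₐ[ℂ] (R3 ⧸ Jnice) := Ideal.Quotient.mkₐ ℂ Jnice

def bE (i : Fin 21) : R3 ⧸ Jnice := mkJ (E i)

lemma bE_li : LinearIndependent ℂ bE := by
  rw [Fintype.linearIndependent_iff]
  intro g hg i
  have hsum : mkJ (∑ j, g j • E j) = 0 := by
    rw [map_sum]
    simpa [bE, map_smul] using hg
  have hmem : (∑ j, g j • E j) ∈ Jnice := by
    rwa [mkJ, Ideal.Quotient.mkₐ_eq_mk, Ideal.Quotient.eq_zero_iff_mem] at hsum
  have hpi : pi3 (∑ j, g j • E j) = 0 := pi3_eq_zero_of_mem hmem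
  rw [map_sum] at hpi
  simp only [map_smul, pi3_E] at hpi
  exact Fintype.linearIndependent_iff.1 E_li g hpi i

lemma mk_M_mem_span :
    ∀ b a c : ℕ, mkJ (X 0 ^ a * X 1 ^ b * X 2 ^ c) ∈ Submodule.span ℂ (Set.range bE) := by
  intro b
  induction b using Nat.strong_induction_on with
  | _ b ih =>
    intro a c
    by_cases ha : 3 ≤ a
    · obtain ⟨a', rfl⟩ := Nat.exists_eq_add_of_le ha
      have hmem : (X 0 ^ (3 + a') * X 1 ^ b * X 2 ^ c : R3) ∈ Jnice := by
        have : (X 0 ^ (3 + a') * X 1 ^ b * X 2 ^ c : R3)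
            = (X 0 ^ a' * X 1 ^ b * X 2 ^ c) * X 0 ^ 3 := by ring
        rw [this]
        exact Ideal.mul_mem_left _ _ (Ideal.subset_span (by simp))
      rw [show mkJ (X 0 ^ (3 + a') * X 1 ^ b * X 2 ^ c) = 0 by
        rw [mkJ, Ideal.Quotient.mkₐ_eq_mk, Ideal.Quotient.eq_zero_iff_mem]; exact hmem]
      exact Submodule.zero_mem _
    by_cases hc : 3 ≤ c
    · obtain ⟨c', rfl⟩ := Nat.exists_eq_add_of_le hc
      have hmem : (X 0 ^ a * X 1 ^ b * X 2 ^ (3 + c') : R3) ∈ Jnice := by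
        have : (X 0 ^ a * X 1 ^ b * X 2 ^ (3 + c') : R3)
            = (X 0 ^ a * X 1 ^ b * X 2 ^ c') * X 2 ^ 3 := by ring
        rw [this]
        exact Ideal.mul_mem_left _ _ (Ideal.subset_span (by simp))
      rw [show mkJ (X 0 ^ a * X 1 ^ b * X 2 ^ (3 + c')) = 0 by
        rw [mkJ, Ideal.Quotient.mkₐ_eq_mk, Ideal.Quotient.eq_zero_iff_mem]; exact hmem]
      exact Submodule.zero_mem _
    by_cases hbc : 2 ≤ b ∧ 1 ≤ c
    · obtain ⟨hb2, hc1⟩ := hbc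
      obtain ⟨b', rfl⟩ := Nat.exists_eq_add_of_le hb2
      obtain ⟨c', rfl⟩ := Nat.exists_eq_add_of_le hc1
      have hmem : (X 0 ^ a * X 1 ^ (2 + b') * X 2 ^ (1 + c') : R3) ∈ Jnice := by
        have : (X 0 ^ a * X 1 ^ (2 + b') * X 2 ^ (1 + c') : R3)
            = (X 0 ^ a * X 1 ^ b' * X 2 ^ c') * (X 1 ^ 2 * X 2) := by ring
        rw [this]
        exact Ideal.mul_mem_left _ _ (Ideal.subset_span (by simp))
      rw [show mkJ (X 0 ^ a * X 1 ^ (2 + b') * X 2 ^ (1 + c')) = 0 by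
        rw [mkJ, Ideal.Quotient.mkₐ_eq_mk, Ideal.Quotient.eq_zero_iff_mem]; exact hmem]
      exact Submodule.zero_mem _
    by_cases hb : 3 ≤ b
    · obtain ⟨b', rfl⟩ := Nat.exists_eq_add_of_le hb
      have key : (X 0 ^ a * X 1 ^ (3 + b') * X 2 ^ c : R3)
          = (X 0 ^ a * X 1 ^ b' * X 2 ^ c) * (X 1 ^ 3 + 3 * X 2 ^ 2)
            + (-3 : ℂ) • (X 0 ^ a * X 1 ^ b' * X 2 ^ (c + 2)) := by
        rw [smul_eq_C_mul]
        push_cast [map_ofNat]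
        ring_nf
        rw [show C (-3 : ℂ) = -3 by simp [map_ofNat]]
        ring
      rw [key, map_add, map_smul]
      have h1 : mkJ ((X 0 ^ a * X 1 ^ b' * X 2 ^ c) * (X 1 ^ 3 + 3 * X 2 ^ 2)) = 0 := by
        rw [mkJ, Ideal.Quotient.mkₐ_eq_mk, Ideal.Quotient.eq_zero_iff_mem]
        exact Ideal.mul_mem_left _ _ (Ideal.subset_span (by simp))
      rw [h1, zero_add]
      exact Submodule.smul_mem _ _ (ih b' (by omega) a (c + 2))
    · obtain ⟨i, hi⟩ := trip_surj a b c (by omega) (by omega) (by omega) (by omega)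
      apply Submodule.subset_span
      refine ⟨i, ?_⟩
      rw [bE, E, hi]

lemma mk_mem_span (p : R3) : mkJ p ∈ Submodule.span ℂ (Set.range bE) := by
  have hp : p ∈ Submodule.span ℂ (Set.range (basisMonomials (Fin 3) ℂ)) := by
    rw [Module.Basis.span_eq]; trivial
  induction hp using Submodule.span_induction with
  | mem x hx =>
    obtain ⟨d, rfl⟩ := hx
    rw [show ((basisMonomials (Fin 3) ℂ) d : R3) = monomial d 1 by
      simp [coe_basisMonomials], monomial_eq_prod]
    exact mk_M_mem_span _ _ _
  | zero => rw [map_zero]; exact Submodule.zero_mem _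
  | add x y _ _ hx hy => rw [map_add]; exact Submodule.add_mem _ hx hy
  | smul c x _ hx => rw [map_smul]; exact Submodule.smul_mem _ _ hx

lemma bE_span : ⊤ ≤ Submodule.span ℂ (Set.range bE) := by
  intro q _
  obtain ⟨p, rfl⟩ := Ideal.Quotient.mkₐ_surjective ℂ (I := Jnice) q
  exact mk_mem_span p

def basisQ : Module.Basis (Fin 21) ℂ (R3 ⧸ Jnice) := Module.Basis.mk bE_li bE_span

lemma finrank_Q : Module.finrank ℂ (R3 ⧸ Jnice) = 21 := by
  rw [Module.finrank_eq_card_basis basisQ, Fintype.card_fin]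

abbrev Loc3 := Localization.AtPrime mOrigin₃

-- nilpotency of variables mod Jnice
lemma mk_X_nilpotent (i : Fin 3) : IsNilpotent (Ideal.Quotient.mk Jnice (X i)) := by
  fin_cases i
  · refine ⟨3, ?_⟩
    rw [← map_pow, Ideal.Quotient.eq_zero_iff_mem]
    exact Ideal.subset_span (by simp)
  · refine ⟨5, ?_⟩
    rw [← map_pow, Ideal.Quotient.eq_zero_iff_mem]
    show (X 1 ^ 5 : R3) ∈ Jnice
    have h : (X 1 ^ 5 : R3) = X 1 ^ 2 * (X 1 ^ 3 + 3 * X 2 ^ 2) - 3 * X 2 * (X 1 ^ 2 * X 2) := by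
      ring
    rw [h]
    exact Ideal.sub_mem _ (Ideal.mul_mem_left _ _ (Ideal.subset_span (by simp)))
      (Ideal.mul_mem_left _ _ (Ideal.subset_span (by simp)))
  · refine ⟨3, ?_⟩
    rw [← map_pow, Ideal.Quotient.eq_zero_iff_mem]
    exact Ideal.subset_span (by simp)

lemma mk_nilpotent_of_mem_m {n : R3} (hn : n ∈ mOrigin₃) :
    IsNilpotent (Ideal.Quotient.mk Jnice n) := by
  have hspan : n ∈ Ideal.span (MvPolynomial.X '' (Set.univ : Set (Fin 3)) :
      Set R3) := by
    rw [mem_ideal_span_X_image]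
    intro m hm
    by_cases hm0 : m = 0
    · exfalso
      have hc : constantCoeff n = 0 := by
        rw [mOrigin₃, RingHom.mem_ker] at hn
        rw [← eval_zero]; exact hn
      rw [hm0] at hm
      exact (mem_support_iff.1 hm) hc
    · obtain ⟨i, hi⟩ := Finsupp.ne_iff.1 hm0
      exact ⟨i, Set.mem_univ i, by simpa using hi⟩
  have hle : Ideal.span (MvPolynomial.X '' (Set.univ : Set (Fin 3)) : Set R3)
      ≤ Ideal.comap (Ideal.Quotient.mk Jnice) (nilradical (R3 ⧸ Jnice)) := by
    rw [Ideal.span_le]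
    rintro _ ⟨i, -, rfl⟩
    exact mk_X_nilpotent i
  exact hle hspan

lemma isUnit_mk_of_primeCompl {s : R3} (hs : s ∈ mOrigin₃.primeCompl) :
    IsUnit (Ideal.Quotient.mk Jnice s) := by
  have hs' : s ∉ mOrigin₃ := hs
  have he : eval (0 : Fin 3 → ℂ) s ≠ 0 := by
    intro h
    exact hs' (by rwa [mOrigin₃, RingHom.mem_ker])
  have hdecomp : s = C (eval (0 : Fin 3 → ℂ) s) + (s - C (eval (0 : Fin 3 → ℂ) s)) := by ring
  have hnil : IsNilpotent (Ideal.Quotient.mk Jnice (s - C (eval (0 : Fin 3 → ℂ) s))) := by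
    apply mk_nilpotent_of_mem_m
    rw [mOrigin₃, RingHom.mem_ker]
    simp
  have hu : IsUnit (Ideal.Quotient.mk Jnice (C (eval (0 : Fin 3 → ℂ) s))) := by
    exact (IsUnit.map C (isUnit_iff_ne_zero.2 he)).map _
  rw [hdecomp, map_add]
  exact hnil.isUnit_add_left_of_commute hu (Commute.all _ _)

def ψ : Loc3 →+* R3 ⧸ Jnice :=
  IsLocalization.lift (M := mOrigin₃.primeCompl) (S := Loc3)
    (g := Ideal.Quotient.mk Jnice) (fun s => isUnit_mk_of_primeCompl s.2)

lemma ψ_algebraMap (p : R3) : ψ (algebraMap R3 Loc3 p) = Ideal.Quotient.mk Jnice p :=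
  IsLocalization.lift_eq _ p

def ψa : Loc3 →ₐ[ℂ] R3 ⧸ Jnice :=
  { ψ with
    commutes' := fun c => by
      have h1 : algebraMap ℂ Loc3 c = algebraMap R3 Loc3 (C c) := by
        rw [IsScalarTower.algebraMap_eq ℂ R3 Loc3]; rfl
      show ψ (algebraMap ℂ Loc3 c) = algebraMap ℂ (R3 ⧸ Jnice) c
      rw [h1, ψ_algebraMap]
      rfl }

lemma ψa_surjective : Function.Surjective ψa := by
  intro q
  obtain ⟨p, rfl⟩ := Ideal.Quotient.mk_surjective (I := Jnice) q
  exact ⟨algebraMap R3 Loc3 p, ψ_algebraMap p⟩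

lemma ker_ψa : RingHom.ker ψa = Ideal.map (algebraMap R3 Loc3) Jnice := by
  apply le_antisymm
  · intro y hy
    rw [RingHom.mem_ker] at hy
    obtain ⟨⟨r, s⟩, hrs⟩ := IsLocalization.surj (M := mOrigin₃.primeCompl) y
    have h2 : ψ (y * algebraMap R3 Loc3 s) = ψ (algebraMap R3 Loc3 r) := by rw [hrs]
    rw [map_mul, ψ_algebraMap, ψ_algebraMap] at h2
    have hy' : ψ y = 0 := hy
    rw [hy', zero_mul] at h2
    have hr : r ∈ Jnice := by
      rw [← Ideal.Quotient.eq_zero_iff_mem, ← h2]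
    have hu : IsUnit (algebraMap R3 Loc3 s) :=
      IsLocalization.map_units Loc3 s
    have : y = (hu.unit⁻¹ : Units Loc3) * algebraMap R3 Loc3 r := by
      rw [← hrs]
      rw [mul_comm y, ← mul_assoc, hu.val_inv_mul, one_mul]
    rw [this]
    exact Ideal.mul_mem_left _ _ (Ideal.mem_map_of_mem _ hr)
  · rw [Ideal.map_le_iff_le_comap]
    intro x hx
    rw [Ideal.mem_comap, RingHom.mem_ker]
    show ψ (algebraMap R3 Loc3 x) = 0
    rw [ψ_algebraMap, Ideal.Quotient.eq_zero_iff_mem]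
    exact hx

lemma hpd0 (t : ℂ) : pderiv 0 (g₈₄ t) = 4 * X 0 ^ 3 := by simp [g₈₄]
lemma hpd1 (t : ℂ) : pderiv 1 (g₈₄ t) = 3 * (X 1 ^ 2 * X 2) := by simp [g₈₄]; ring
lemma hpd2 (t : ℂ) : pderiv 2 (g₈₄ t) = (X 1 ^ 3 + 3 * X 2 ^ 2) - 4 * C t * X 2 ^ 3 := by
  simp [g₈₄]; ring

lemma c3 : (C (3:ℂ) : R3) = 3 := by simp [map_ofNat]
lemma c4 : (C (4:ℂ) : R3) = 4 := by simp [map_ofNat]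

def Jpd (t : ℂ) : Ideal R3 :=
  Ideal.span {pderiv 0 (g₈₄ t), pderiv 1 (g₈₄ t), pderiv 2 (g₈₄ t)}

def s₀ (t : ℂ) : R3 := 3 - 4 * C t * X 2

lemma s₀_primeCompl (t : ℂ) : s₀ t ∈ mOrigin₃.primeCompl := by
  intro h
  have h2 : eval (0 : Fin 3 → ℂ) (s₀ t) = 0 := h
  simp [s₀, map_ofNat] at h2

lemma X0cube_mem (t : ℂ) : (X 0 ^ 3 : R3) ∈ Jpd t := by
  have h : C (4⁻¹:ℂ) * pderiv 0 (g₈₄ t) = X 0 ^ 3 := by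
    rw [hpd0, ← c4, ← mul_assoc, ← C_mul]
    norm_num
  rw [← h]
  exact Ideal.mul_mem_left _ _ (Ideal.subset_span (by simp [Jpd]))

lemma X12X2_mem (t : ℂ) : (X 1 ^ 2 * X 2 : R3) ∈ Jpd t := by
  have h : C (3⁻¹:ℂ) * pderiv 1 (g₈₄ t) = X 1 ^ 2 * X 2 := by
    rw [hpd1, ← c3, ← mul_assoc, ← C_mul]
    norm_num
  rw [← h]
  exact Ideal.mul_mem_left _ _ (Ideal.subset_span (by simp [Jpd]))

lemma X2cube_s₀_mem (t : ℂ) : (X 2 ^ 3 * s₀ t : R3) ∈ Jpd t := by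
  have key : C (3:ℂ) * (X 2 ^ 3 * s₀ t)
      = C 3 * X 2 * pderiv 2 (g₈₄ t) - X 1 * pderiv 1 (g₈₄ t) := by
    rw [hpd1, hpd2, c3, s₀]
    ring
  have h3 : (X 2 ^ 3 * s₀ t : R3) = C (3⁻¹:ℂ) * (C 3 * (X 2 ^ 3 * s₀ t)) := by
    rw [← mul_assoc, ← C_mul]
    norm_num
  rw [h3, key]
  refine Ideal.mul_mem_left _ _ (Ideal.sub_mem _ ?_ ?_)
  · exact Ideal.mul_mem_left _ _ (Ideal.subset_span (by simp [Jpd]))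
  · exact Ideal.mul_mem_left _ _ (Ideal.subset_span (by simp [Jpd]))

lemma map_Jpd_eq (t : ℂ) :
    Ideal.map (algebraMap R3 Loc3) (Jpd t) = Ideal.map (algebraMap R3 Loc3) Jnice := by
  apply le_antisymm
  · rw [Ideal.map_le_iff_le_comap, Jpd, Ideal.span_le]
    rintro x hx
    simp only [Set.mem_insert_iff, Set.mem_singleton_iff] at hx
    have hmem : x ∈ Jnice := by
      rcases hx with rfl | rfl | rfl
      · rw [hpd0]
        exact Ideal.mul_mem_left _ _ (Ideal.subset_span (by simp [Jnice]))
      · rw [hpd1]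
        exact Ideal.mul_mem_left _ _ (Ideal.subset_span (by simp [Jnice]))
      · rw [hpd2]
        exact Ideal.sub_mem _ (Ideal.subset_span (by simp [Jnice]))
          (Ideal.mul_mem_left _ _ (Ideal.subset_span (by simp [Jnice])))
    exact Ideal.mem_comap.2 (Ideal.mem_map_of_mem _ hmem)
  · -- first : image of X 2 ^ 3 lies in map (Jpd t)
    have hX2 : algebraMap R3 Loc3 (X 2 ^ 3) ∈ Ideal.map (algebraMap R3 Loc3) (Jpd t) := by
      have hu : IsUnit (algebraMap R3 Loc3 (s₀ t)) :=
        IsLocalization.map_units Loc3 ⟨s₀ t, s₀_primeCompl t⟩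
      have h : algebraMap R3 Loc3 (X 2 ^ 3)
          = (hu.unit⁻¹ : Units Loc3) * algebraMap R3 Loc3 (X 2 ^ 3 * s₀ t) := by
        rw [map_mul]
        rw [mul_comm (algebraMap R3 Loc3 (X 2 ^ 3)), ← mul_assoc, hu.val_inv_mul, one_mul]
      rw [h]
      exact Ideal.mul_mem_left _ _ (Ideal.mem_map_of_mem _ (X2cube_s₀_mem t))
    rw [Ideal.map_le_iff_le_comap, Jnice, Ideal.span_le]
    rintro x hx
    simp only [Set.mem_insert_iff, Set.mem_singleton_iff] at hx
    rcases hx with rfl | rfl | rfl | rfl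
    · exact Ideal.mem_comap.2 (Ideal.mem_map_of_mem _ (X0cube_mem t))
    · exact Ideal.mem_comap.2 (Ideal.mem_map_of_mem _ (X12X2_mem t))
    · have h : (X 1 ^ 3 + 3 * X 2 ^ 2 : R3) = pderiv 2 (g₈₄ t) + 4 * C t * X 2 ^ 3 := by
        rw [hpd2]; ring
      refine Ideal.mem_comap.2 ?_
      rw [h, map_add]
      refine Ideal.add_mem _ (Ideal.mem_map_of_mem _ (Ideal.subset_span (by simp [Jpd]))) ?_
      rw [map_mul]
      exact Ideal.mul_mem_left _ _ hX2
    · exact Ideal.mem_comap.2 hX2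


/-- for every t ∈ ℂ, g = x⁴ + z³w + w³ − tw⁴ has local Milnor number 21
    at the origin: dim_ℂ O/J(g)·O = 21 (the A₃ ⊕ E₇ singularity of Example 8.4). -/
theorem local_milnor_number_example84_s0 (t : ℂ) :
    Module.finrank ℂ
      (Localization.AtPrime mOrigin₃ ⧸
        Ideal.map (algebraMap (MvPolynomial (Fin 3) ℂ) (Localization.AtPrime mOrigin₃))
          (Ideal.span {pderiv 0 (g₈₄ t), pderiv 1 (g₈₄ t), pderiv 2 (g₈₄ t)})) = 21 := by
  have hker : Ideal.map (algebraMap R3 Loc3)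
      (Ideal.span {pderiv 0 (g₈₄ t), pderiv 1 (g₈₄ t), pderiv 2 (g₈₄ t)}) = RingHom.ker ψa := by
    rw [show Ideal.span {pderiv 0 (g₈₄ t), pderiv 1 (g₈₄ t), pderiv 2 (g₈₄ t)} = Jpd t from rfl,
      map_Jpd_eq t, ← ker_ψa]
  rw [hker]
  have e := Ideal.quotientKerAlgEquivOfSurjective ψa_surjective
  exact e.toLinearEquiv.finrank_eq.trans finrank_Q
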